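/- Let X be a set, H ∈ ℕ, D ∈ ℕ, μ_1,…,μ_D ∈ ℂ nonzero complex numbers, and k^1,…,k^D : X × X → ℝ symmetric positive semidefinite base kernels. Define the matrix-valued Koopman kernel K(x,x') := Σ_{j=1}^{D} K^{μ_j}(x,x'), where K^{μ_j} is the matrix-valued Koopman eigenfunction kernel built from the eigenvalue μ_j and base kernel k^j. Then K is positive semidefinite in the operator-valued sense: for every N ∈ ℕ, trajectories x^(1),…,x^(N) : {0,…,H} → X and vectors v^(1),…,v^(N) ∈ ℂ^{H+1}, the sum Σ_{i,j=1}^{N} (v^(i))^* · K(x^(i), x^(j)) · v^(j) is a nonnegative real number. -/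

import Mathlib

/-- Scalar time-discrete Koopman eigenfunction kernel
`k^μ(x,x') = (1/(H+1)²) Σ_{m,n} μ^(−m) k(x_m, x'_n) conj(μ)^(−n)`. -/
noncomputable def kmu {X : Type*} (H : ℕ) (μ : ℂ) (k : X → X → ℝ)
    (x x' : Fin (H + 1) → X) : ℂ :=
  (1 / ((H : ℂ) + 1) ^ 2) *
    ∑ m : Fin (H + 1), ∑ n : Fin (H + 1),
      μ ^ (-((m : ℕ) : ℤ)) * (k (x m) (x' n) : ℂ) * ((starRingEnd ℂ) μ) ^ (-((n : ℕ) : ℤ))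

/-- Matrix-valued time-discrete Koopman eigenfunction kernel
`K^μ(x,x')_{m,n} = μ^m conj(μ)^n k^μ(x,x')`. -/
noncomputable def Kmu {X : Type*} (H : ℕ) (μ : ℂ) (k : X → X → ℝ)
    (x x' : Fin (H + 1) → X) : Matrix (Fin (H + 1)) (Fin (H + 1)) ℂ :=
  fun m n => μ ^ (m : ℕ) * ((starRingEnd ℂ) μ) ^ (n : ℕ) * kmu H μ k x x'

/-- PSD over an arbitrary fintype index, derived from PSD over `Fin M`. -/
lemma psd_fintype {X : Type*} (k : X → X → ℝ)
    (hpsd : ∀ (M : ℕ) (a : Fin M → X) (c : Fin M → ℂ),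
      (∑ i, ∑ i', (starRingEnd ℂ) (c i) * c i' * (k (a i) (a i') : ℂ)).im = 0 ∧
      0 ≤ (∑ i, ∑ i', (starRingEnd ℂ) (c i) * c i' * (k (a i) (a i') : ℂ)).re)
    {ι : Type*} [Fintype ι] (a : ι → X) (c : ι → ℂ) :
    (∑ s, ∑ s', (starRingEnd ℂ) (c s) * c s' * (k (a s) (a s') : ℂ)).im = 0 ∧
    0 ≤ (∑ s, ∑ s', (starRingEnd ℂ) (c s) * c s' * (k (a s) (a s') : ℂ)).re := by
  classical
  set e := (Fintype.equivFin ι).symm with he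
  have hsum :
      (∑ t : Fin (Fintype.card ι), ∑ t',
          (starRingEnd ℂ) (c (e t)) * c (e t') * (k (a (e t)) (a (e t')) : ℂ)) =
      ∑ s, ∑ s', (starRingEnd ℂ) (c s) * c s' * (k (a s) (a s') : ℂ) := by
    refine Fintype.sum_equiv e _ _ fun t => ?_
    exact Fintype.sum_equiv e _ _ fun t' => rfl
  have := hpsd (Fintype.card ι) (fun t => a (e t)) (fun t => c (e t))
  rwa [hsum] at this

/-- Factorization of the quadratic form of `Kmu` at a fixed pair of trajectories. -/
lemma quad_factor {X : Type*} (H : ℕ) (μ : ℂ) (k : X → X → ℝ)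
    (xi xj : Fin (H + 1) → X) (vi vj : Fin (H + 1) → ℂ) :
    dotProduct (star vi) ((Kmu H μ k xi xj).mulVec vj) =
      (∑ m : Fin (H + 1), (starRingEnd ℂ) (vi m) * μ ^ ((m : ℕ))) *
      ((∑ n : Fin (H + 1), ((starRingEnd ℂ) μ) ^ ((n : ℕ)) * vj n) * kmu H μ k xi xj) := by
  simp only [dotProduct, Matrix.mulVec, Kmu, Pi.star_apply, RCLike.star_def]
  rw [Finset.sum_mul]
  refine Finset.sum_congr rfl fun m _ => ?_
  simp only [Finset.mul_sum, Finset.sum_mul]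
  refine Finset.sum_congr rfl fun n _ => ?_
  ring

/-- Pull scalar factors out of the double sum defining `kmu`. -/
lemma kmu_expand {X : Type*} (H : ℕ) (μ : ℂ) (k : X → X → ℝ)
    (xi xj : Fin (H + 1) → X) (A G : ℂ) :
    A * (G * kmu H μ k xi xj) =
    (1 / ((H : ℂ) + 1) ^ 2) *
      ∑ p : Fin (H + 1), ∑ q : Fin (H + 1),
        (A * μ ^ (-((p : ℕ) : ℤ))) * (G * ((starRingEnd ℂ) μ) ^ (-((q : ℕ) : ℤ))) *
          (k (xi p) (xj q) : ℂ) := by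
  simp only [kmu, Finset.mul_sum, Finset.sum_mul]
  refine Finset.sum_congr rfl fun p _ => ?_
  refine Finset.sum_congr rfl fun q _ => ?_
  ring

/-- Proposition 1(i)/Corollary 1 (time-discrete form): the Koopman kernel, the sum of
the eigenfunction kernels over a finite family of eigenvalues, is positive semidefinite
in the operator-valued sense. -/
theorem stmt_5 {X : Type*} (H D : ℕ) (μ : Fin D → ℂ) (hμ : ∀ j, μ j ≠ 0)
    (k : Fin D → X → X → ℝ)
    (hsymm : ∀ j a b, k j a b = k j b a)
    (hpsd : ∀ (j : Fin D) (M : ℕ) (a : Fin M → X) (c : Fin M → ℂ),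
      (∑ i, ∑ i', (starRingEnd ℂ) (c i) * c i' * (k j (a i) (a i') : ℂ)).im = 0 ∧
      0 ≤ (∑ i, ∑ i', (starRingEnd ℂ) (c i) * c i' * (k j (a i) (a i') : ℂ)).re)
    (K : (Fin (H + 1) → X) → (Fin (H + 1) → X) → Matrix (Fin (H + 1)) (Fin (H + 1)) ℂ)
    (hK : ∀ x x', K x x' = ∑ j : Fin D, Kmu H (μ j) (k j) x x')
    (N : ℕ) (x : Fin N → Fin (H + 1) → X) (v : Fin N → Fin (H + 1) → ℂ) :
    (∑ i, ∑ j, dotProduct (star (v i)) ((K (x i) (x j)).mulVec (v j))).im = 0 ∧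
    0 ≤ (∑ i, ∑ j, dotProduct (star (v i)) ((K (x i) (x j)).mulVec (v j))).re := by
  classical
  -- split the quadratic form over the eigenvalues
  have hsplit : ∀ i j : Fin N,
      dotProduct (star (v i)) ((K (x i) (x j)).mulVec (v j)) =
      ∑ d : Fin D,
        dotProduct (star (v i)) ((Kmu H (μ d) (k d) (x i) (x j)).mulVec (v j)) := by
    intro i j
    rw [hK]
    simp only [dotProduct, Matrix.mulVec, Matrix.sum_apply, Finset.sum_mul,
      Finset.mul_sum]
    exact Eq.trans (Finset.sum_congr rfl fun m _ => Finset.sum_comm) Finset.sum_comm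
  simp only [hsplit]
  have reorder : (∑ i : Fin N, ∑ j : Fin N, ∑ d : Fin D,
      dotProduct (star (v i)) ((Kmu H (μ d) (k d) (x i) (x j)).mulVec (v j))) =
      ∑ d : Fin D, ∑ i : Fin N, ∑ j : Fin N,
        dotProduct (star (v i)) ((Kmu H (μ d) (k d) (x i) (x j)).mulVec (v j)) := by
    rw [show (∑ i : Fin N, ∑ j : Fin N, ∑ d : Fin D,
        dotProduct (star (v i)) ((Kmu H (μ d) (k d) (x i) (x j)).mulVec (v j))) =
        ∑ i : Fin N, ∑ d : Fin D, ∑ j : Fin N,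
        dotProduct (star (v i)) ((Kmu H (μ d) (k d) (x i) (x j)).mulVec (v j)) from
      Finset.sum_congr rfl fun i _ => Finset.sum_comm]
    exact Finset.sum_comm
  rw [reorder]
  -- it suffices to show each eigenvalue's contribution is a nonnegative real
  have main : ∀ d : Fin D,
      (∑ i : Fin N, ∑ j : Fin N,
        dotProduct (star (v i)) ((Kmu H (μ d) (k d) (x i) (x j)).mulVec (v j))).im = 0 ∧
      0 ≤ (∑ i : Fin N, ∑ j : Fin N,
        dotProduct (star (v i)) ((Kmu H (μ d) (k d) (x i) (x j)).mulVec (v j))).re := by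
    intro d
    set α : Fin N → ℂ := fun i => ∑ m : Fin (H + 1), (starRingEnd ℂ) (v i m) * (μ d) ^ ((m : ℕ)) with hα
    set c : Fin N × Fin (H + 1) → ℂ :=
      fun s => (starRingEnd ℂ) (α s.1) * ((starRingEnd ℂ) (μ d)) ^ (-((s.2 : ℕ) : ℤ)) with hc
    set a : Fin N × Fin (H + 1) → X := fun s => x s.1 s.2 with ha
    have conj_c : ∀ s : Fin N × Fin (H + 1),
        (starRingEnd ℂ) (c s) = α s.1 * (μ d) ^ (-((s.2 : ℕ) : ℤ)) := by
      intro s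
      simp [hc, map_mul, map_zpow₀, Complex.conj_conj]
    have hβ : ∀ j : Fin N,
        (∑ n : Fin (H + 1), ((starRingEnd ℂ) (μ d)) ^ ((n : ℕ)) * v j n) = (starRingEnd ℂ) (α j) := by
      intro j
      simp only [hα, map_sum, map_mul, map_pow, Complex.conj_conj]
      exact Finset.sum_congr rfl fun n _ => mul_comm _ _
    have key : (∑ i : Fin N, ∑ j : Fin N,
        dotProduct (star (v i)) ((Kmu H (μ d) (k d) (x i) (x j)).mulVec (v j))) =
        (1 / ((H : ℂ) + 1) ^ 2) *
          ∑ s : Fin N × Fin (H + 1), ∑ s' : Fin N × Fin (H + 1),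
            (starRingEnd ℂ) (c s) * c s' * ((k d) (a s) (a s') : ℂ) := by
      calc
        (∑ i : Fin N, ∑ j : Fin N,
            dotProduct (star (v i)) ((Kmu H (μ d) (k d) (x i) (x j)).mulVec (v j)))
          = ∑ i : Fin N, ∑ j : Fin N, (1 / ((H : ℂ) + 1) ^ 2) *
              ∑ p : Fin (H + 1), ∑ q : Fin (H + 1),
                (α i * (μ d) ^ (-((p : ℕ) : ℤ))) *
                ((starRingEnd ℂ) (α j) * ((starRingEnd ℂ) (μ d)) ^ (-((q : ℕ) : ℤ))) *
                ((k d) (x i p) (x j q) : ℂ) := by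
            refine Finset.sum_congr rfl fun i _ => Finset.sum_congr rfl fun j _ => ?_
            rw [quad_factor, hβ j,
              kmu_expand H (μ d) (k d) (x i) (x j) (α i) ((starRingEnd ℂ) (α j))]
        _ = (1 / ((H : ℂ) + 1) ^ 2) *
              ∑ s : Fin N × Fin (H + 1), ∑ s' : Fin N × Fin (H + 1),
                (starRingEnd ℂ) (c s) * c s' * ((k d) (a s) (a s') : ℂ) := by
            simp only [Fintype.sum_prod_type, conj_c, hc, ha]
            conv_rhs => rw [Finset.mul_sum]
            refine Finset.sum_congr rfl fun i _ => ?_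
            rw [← Finset.mul_sum]
            rw [Finset.sum_comm]
            simp only [map_mul, map_zpow₀, Complex.conj_conj]
    obtain ⟨h1, h2⟩ := psd_fintype (k d) (hpsd d) a c
    have hC : (1 / ((H : ℂ) + 1) ^ 2) = (((1 / ((H : ℝ) + 1) ^ 2 : ℝ)) : ℂ) := by
      push_cast
      ring
    rw [key, hC]
    constructor
    · rw [Complex.im_ofReal_mul, h1, mul_zero]
    · rw [Complex.re_ofReal_mul]
      exact mul_nonneg (by positivity) h2
  constructor
  · rw [Complex.im_sum]
    exact Finset.sum_eq_zero fun d _ => (main d).1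
  · rw [Complex.re_sum]
    exact Finset.sum_nonneg fun d _ => (main d).2
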